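/- Let T > 0, let L : ℝ → (E →ₗ[ℂ] E) be a time-dependent family of linear operators, and let v : ℝ → E be differentiable on [0,T] with ‖v t‖ = 1 for all t ∈ [0,T], satisfying the normalized master equation v'(t) = L t (v t) − Re⟨v t, L t (v t)⟩ • v t on [0,T]. If the speed function t ↦ √(‖L t (v t)‖² − |⟨v t, L t (v t)⟩|²) is integrable on [0,T], then Real.arccos ‖⟨v 0, v T⟩‖ ≤ ∫₀ᵀ √(‖L t (v t)‖² − |⟨v t, L t (v t)⟩|²) dt. -/

import Mathlib

open Set MeasureTheory intervalIntegral Filter Topology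

lemma qsl_comparison (T : ℝ) (hT : 0 < T) (p Δ p' : ℝ → ℝ)
    (hp : ∀ t ∈ Icc (0:ℝ) T, HasDerivAt p (p' t) t)
    (hp0 : p 0 = 1)
    (hple : ∀ t ∈ Icc (0:ℝ) T, 0 ≤ p t ∧ p t ≤ 1)
    (hΔ : ∀ t, 0 ≤ Δ t)
    (hbd : ∀ t ∈ Icc (0:ℝ) T, |p' t| ≤ 2 * Δ t * Real.sqrt (p t * (1 - p t)))
    (hint : IntervalIntegrable Δ volume 0 T) :
    Real.arccos (Real.sqrt (p T)) ≤ ∫ t in (0:ℝ)..T, Δ t := by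
  set I : ℝ → ℝ := fun t => ∫ s in (0:ℝ)..t, Δ s with hIdef
  set S : ℝ → ℝ := fun t => Real.arccos (Real.sqrt (p t)) with hSdef
  have hTmem : T ∈ Icc (0:ℝ) T := ⟨hT.le, le_rfl⟩
  have h0mem : (0:ℝ) ∈ Icc (0:ℝ) T := ⟨le_rfl, hT.le⟩
  -- continuity
  have hpcont : ContinuousOn p (Icc 0 T) := fun t ht =>
    (hp t ht).continuousAt.continuousWithinAt
  have hScont : ContinuousOn S (Icc 0 T) :=
    Real.continuous_arccos.comp_continuousOn (Real.continuous_sqrt.comp_continuousOn hpcont)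
  have hIcont : ContinuousOn I (Icc 0 T) := by
    have := intervalIntegral.continuousOn_primitive_interval' hint
      (by rw [uIcc_of_le hT.le]; exact h0mem)
    rwa [uIcc_of_le hT.le] at this
  -- integrability on subintervals
  have hsub : ∀ x ∈ Icc (0:ℝ) T, ∀ y ∈ Icc (0:ℝ) T, IntervalIntegrable Δ volume x y := by
    intro x hx y hy
    refine hint.mono_set ?_
    exact uIcc_subset_uIcc (by rwa [uIcc_of_le hT.le]) (by rwa [uIcc_of_le hT.le])
  have hI0 : I 0 = 0 := intervalIntegral.integral_same
  have hIdiff : ∀ x ∈ Icc (0:ℝ) T, ∀ y ∈ Icc (0:ℝ) T,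
      I y - I x = ∫ s in x..y, Δ s := by
    intro x hx y hy
    exact intervalIntegral.integral_interval_sub_left (hsub 0 h0mem y hy) (hsub 0 h0mem x hx)
  have hImono : ∀ x ∈ Icc (0:ℝ) T, ∀ y ∈ Icc (0:ℝ) T, x ≤ y → I x ≤ I y := by
    intro x hx y hy hxy
    have h1 := hIdiff x hx y hy
    have h2 : 0 ≤ ∫ s in x..y, Δ s :=
      intervalIntegral.integral_nonneg hxy (fun u _ => hΔ u)
    linarith
  have hInn : ∀ x ∈ Icc (0:ℝ) T, 0 ≤ I x := by
    intro x hx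
    have := hImono 0 h0mem x hx hx.1
    linarith [hI0]
  by_cases hcase : Real.pi / 2 ≤ I T
  · exact le_trans (Real.arccos_le_pi_div_two.mpr (Real.sqrt_nonneg _)) hcase
  push_neg at hcase
  by_contra hcon
  push_neg at hcon
  -- the set where S ≤ I
  set A : Set ℝ := Icc 0 T ∩ (fun t => S t - I t) ⁻¹' (Iic 0) with hAdef
  have hAsub : A ⊆ Icc 0 T := inter_subset_left
  have hAclosed : IsClosed A :=
    ContinuousOn.preimage_isClosed_of_isClosed (hScont.sub hIcont) isClosed_Icc isClosed_Iic
  have hA0 : (0:ℝ) ∈ A := by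
    constructor
    · exact h0mem
    · simp only [mem_preimage, mem_Iic, hSdef, hIdef, sub_nonpos]
      rw [hp0]
      simp [Real.arccos_one]
  have hAbdd : BddAbove A := (bddAbove_Icc).mono hAsub
  set t₀ : ℝ := sSup A with ht₀def
  have ht₀A : t₀ ∈ A := hAclosed.csSup_mem ⟨0, hA0⟩ hAbdd
  have ht₀mem : t₀ ∈ Icc (0:ℝ) T := hAsub ht₀A
  have hSIt₀ : S t₀ ≤ I t₀ := by
    have := ht₀A.2; simpa [sub_nonpos] using this
  have ht₀T : t₀ < T := by
    rcases lt_or_eq_of_le ht₀mem.2 with h | h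
    · exact h
    · exfalso; rw [h] at hSIt₀; exact absurd hSIt₀ (not_le.mpr hcon)
  have hafter : ∀ t ∈ Ioc t₀ T, I t < S t := by
    intro t ht
    by_contra h
    push_neg at h
    have htmem : t ∈ Icc (0:ℝ) T := ⟨le_trans ht₀mem.1 ht.1.le, ht.2⟩
    have : t ∈ A := ⟨htmem, by simpa [sub_nonpos] using h⟩
    exact absurd (le_csSup hAbdd this) (not_le.mpr ht.1)
  have hmemIcc : ∀ t ∈ Ioc t₀ T, t ∈ Icc (0:ℝ) T := fun t ht =>
    ⟨le_trans ht₀mem.1 ht.1.le, ht.2⟩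
  have hplt1 : ∀ t ∈ Ioc t₀ T, p t < 1 := by
    intro t ht
    have h1 : 0 ≤ I t := hInn t (hmemIcc t ht)
    have h2 : I t < S t := hafter t ht
    have h3 : 0 < Real.arccos (Real.sqrt (p t)) := lt_of_le_of_lt h1 h2
    have h4 : Real.sqrt (p t) < 1 := Real.arccos_pos.mp h3
    have h5 := (hple t (hmemIcc t ht)).1
    nlinarith [Real.sq_sqrt h5, Real.sqrt_nonneg (p t)]
  -- find t* with p ∈ (0,1) on (t₀, t*]
  obtain ⟨ts, hts, hrange⟩ : ∃ ts ∈ Ioc t₀ T, ∀ s ∈ Ioc t₀ ts, 0 < p s ∧ p s < 1 := by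
    by_cases hZ : ∃ t ∈ Ioc t₀ T, p t = 0
    · set Z : Set ℝ := {t | t ∈ Ioc t₀ T ∧ p t = 0} with hZdef
      have hZne : Z.Nonempty := by obtain ⟨t, ht, hpt⟩ := hZ; exact ⟨t, ht, hpt⟩
      have hZbdd : BddBelow Z := ⟨t₀, fun z hz => hz.1.1.le⟩
      set t₂ : ℝ := sInf Z with ht₂def
      have ht₂ge : t₀ ≤ t₂ := le_csInf hZne (fun z hz => hz.1.1.le)
      have ht₂le : t₂ ≤ T := by
        obtain ⟨z, hz⟩ := hZne
        exact le_trans (csInf_le hZbdd hz) hz.1.2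
      have ht₂Icc : t₂ ∈ Icc (0:ℝ) T := ⟨le_trans ht₀mem.1 ht₂ge, ht₂le⟩
      have hpt₂ : p t₂ = 0 := by
        have hclos : t₂ ∈ closure Z := csInf_mem_closure hZne hZbdd
        rcases mem_closure_iff_seq_limit.mp hclos with ⟨u, hu, hul⟩
        have hc : ContinuousAt p t₂ := (hp t₂ ht₂Icc).continuousAt
        have h1 : Tendsto (fun n => p (u n)) atTop (𝓝 (p t₂)) := (hc.tendsto).comp hul
        have h2 : (fun n => p (u n)) = fun _ => (0:ℝ) := funext fun n => (hu n).2
        rw [h2] at h1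
        exact (tendsto_const_nhds_iff.mp h1).symm
      have ht₂gt : t₀ < t₂ := by
        rcases lt_or_eq_of_le ht₂ge with h | h
        · exact h
        · exfalso
          have : p t₀ = 0 := by rw [← h] at hpt₂; exact hpt₂
          have hS : S t₀ = Real.pi / 2 := by
            simp [hSdef, this, Real.sqrt_zero, Real.arccos_zero]
          have : Real.pi / 2 ≤ I t₀ := by rw [← hS]; exact hSIt₀
          have := hImono t₀ ht₀mem T hTmem ht₀mem.2
          linarith
      refine ⟨(t₀ + t₂) / 2, ⟨by linarith, by linarith⟩, ?_⟩
      intro s hs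
      have hsmem : s ∈ Ioc t₀ T := ⟨hs.1, by linarith [hs.2]⟩
      refine ⟨?_, hplt1 s hsmem⟩
      rcases (hple s (hmemIcc s hsmem)).1.lt_or_eq with h | h
      · exact h
      · exfalso
        have : s ∈ Z := ⟨hsmem, h.symm⟩
        have := csInf_le hZbdd this
        linarith [hs.2]
    · push_neg at hZ
      refine ⟨T, ⟨ht₀T, le_rfl⟩, ?_⟩
      intro s hs
      exact ⟨lt_of_le_of_ne (hple s (hmemIcc s hs)).1 (Ne.symm (hZ s hs)), hplt1 s hs⟩
  -- main estimate on [s, ts]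
  have key : ∀ s ∈ Ioc t₀ ts, S ts - I ts ≤ S s - I s := by
    intro s hs
    have hst : s ≤ ts := hs.2
    have hsubset : Icc s ts ⊆ Ioc t₀ ts := fun u hu => ⟨lt_of_lt_of_le hs.1 hu.1, hu.2⟩
    have hsub0T : Icc s ts ⊆ Icc 0 T := fun u hu =>
      hmemIcc u ⟨(hsubset hu).1, le_trans (hsubset hu).2 hts.2⟩
    set S' : ℝ → ℝ := fun u =>
      -(1 / Real.sqrt (1 - Real.sqrt (p u) ^ 2)) * (deriv p u / (2 * Real.sqrt (p u)))
      with hS'def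
    have hderiv : ∀ u ∈ Icc s ts, HasDerivAt S (S' u) u := by
      intro u hu
      have hu0T := hsub0T hu
      have hpu := hp u hu0T
      obtain ⟨hpos, hlt⟩ := hrange u (hsubset hu)
      have hne1 : Real.sqrt (p u) ≠ 1 := by
        have h1 : Real.sqrt (p u) < 1 := by
          rw [show (1:ℝ) = Real.sqrt 1 by simp]
          exact Real.sqrt_lt_sqrt hpos.le hlt
        exact ne_of_lt h1
      have hnem1 : Real.sqrt (p u) ≠ -1 := by
        have := Real.sqrt_nonneg (p u); intro h; linarith [h ▸ this]
      have hders := hpu.sqrt (ne_of_gt hpos)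
      have hcomp := (Real.hasDerivAt_arccos hnem1 hne1).comp u hders
      have heq : S' u = -(1 / Real.sqrt (1 - Real.sqrt (p u) ^ 2)) *
          (p' u / (2 * Real.sqrt (p u))) := by
        rw [hS'def]; simp only; rw [hpu.deriv]
      rw [heq]
      simpa [Function.comp_def, hSdef] using hcomp
    have hSD : ∀ u ∈ Icc s ts, |S' u| ≤ Δ u := by
      intro u hu
      obtain ⟨hpos, hlt⟩ := hrange u (hsubset hu)
      have hu0T := hsub0T hu
      have h1 : Real.sqrt (p u) ^ 2 = p u := Real.sq_sqrt (le_of_lt hpos)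
      have hsq : 0 < Real.sqrt (p u) := Real.sqrt_pos.mpr hpos
      have hsq1 : 0 < Real.sqrt (1 - p u) := Real.sqrt_pos.mpr (by linarith)
      have hd : deriv p u = p' u := (hp u hu0T).deriv
      have habs : |S' u| = |p' u| / (2 * Real.sqrt (p u) * Real.sqrt (1 - p u)) := by
        rw [hS'def]; simp only
        rw [h1, hd, abs_mul, abs_neg, abs_div, abs_div, abs_one,
          abs_of_nonneg hsq1.le,
          abs_of_nonneg (by positivity : (0:ℝ) ≤ 2 * Real.sqrt (p u))]
        field_simp
      rw [habs, div_le_iff₀ (by positivity)]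
      have h2 := hbd u hu0T
      have h3 : Real.sqrt (p u * (1 - p u)) = Real.sqrt (p u) * Real.sqrt (1 - p u) :=
        Real.sqrt_mul hpos.le _
      rw [h3] at h2
      calc |p' u| ≤ 2 * Δ u * (Real.sqrt (p u) * Real.sqrt (1 - p u)) := h2
        _ = Δ u * (2 * Real.sqrt (p u) * Real.sqrt (1 - p u)) := by ring
    have hAES : AEStronglyMeasurable S' (volume.restrict (Ioc s ts)) := by
      have hpc : ContinuousOn p (Icc s ts) := hpcont.mono hsub0T
      have hsqc : ContinuousOn (fun u => Real.sqrt (p u)) (Icc s ts) :=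
        Real.continuous_sqrt.comp_continuousOn hpc
      have h1 : ContinuousOn (fun u => Real.sqrt (1 - Real.sqrt (p u) ^ 2)) (Icc s ts) :=
        Real.continuous_sqrt.comp_continuousOn (continuousOn_const.sub (hsqc.pow 2))
      have hg : ContinuousOn (fun u => -(1 / Real.sqrt (1 - Real.sqrt (p u) ^ 2)) *
          (2 * Real.sqrt (p u))⁻¹) (Icc s ts) := by
        apply ContinuousOn.mul
        · apply ContinuousOn.neg
          apply ContinuousOn.div continuousOn_const h1
          intro u hu
          obtain ⟨hpos, hlt⟩ := hrange u (hsubset hu)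
          rw [Real.sq_sqrt hpos.le]
          exact ne_of_gt (Real.sqrt_pos.mpr (by linarith))
        · apply ContinuousOn.inv₀ (continuousOn_const.mul hsqc)
          intro u hu
          obtain ⟨hpos, _⟩ := hrange u (hsubset hu)
          have := Real.sqrt_pos.mpr hpos
          exact mul_ne_zero two_ne_zero this.ne'
      have hm : AEStronglyMeasurable (fun u => deriv p u *
          (-(1 / Real.sqrt (1 - Real.sqrt (p u) ^ 2)) * (2 * Real.sqrt (p u))⁻¹))
          (volume.restrict (Ioc s ts)) :=
        ((stronglyMeasurable_deriv p).aestronglyMeasurable).mul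
          ((hg.mono Ioc_subset_Icc_self).aestronglyMeasurable measurableSet_Ioc)
      refine hm.congr (ae_of_all _ (fun u => ?_))
      rw [hS'def]; simp only; ring
    have hsmem : s ∈ Icc (0:ℝ) T := hsub0T ⟨le_rfl, hst⟩
    have htsmem : ts ∈ Icc (0:ℝ) T := hsub0T ⟨hst, le_rfl⟩
    have hΔsub := hsub s hsmem ts htsmem
    have hS'int : IntervalIntegrable S' volume s ts := by
      rw [intervalIntegrable_iff_integrableOn_Ioc_of_le hst]
      have hΔon : IntegrableOn Δ (Ioc s ts) volume := by
        have h := hΔsub; rwa [intervalIntegrable_iff_integrableOn_Ioc_of_le hst] at h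
      refine Integrable.mono hΔon hAES ?_
      rw [ae_restrict_iff' measurableSet_Ioc]
      exact ae_of_all _ (fun u hu => by
        rw [Real.norm_eq_abs, Real.norm_eq_abs, abs_of_nonneg (hΔ u)]
        exact hSD u ⟨hu.1.le, hu.2⟩)
    have hftc : ∫ u in s..ts, S' u = S ts - S s :=
      intervalIntegral.integral_eq_sub_of_hasDerivAt
        (fun u hu => hderiv u (by rwa [uIcc_of_le hst] at hu)) hS'int
    have hmono : ∫ u in s..ts, S' u ≤ ∫ u in s..ts, Δ u :=
      intervalIntegral.integral_mono_on hst hS'int hΔsub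
        (fun u hu => (abs_le.mp (hSD u hu)).2)
    have hIdf := hIdiff s hsmem ts htsmem
    linarith
  -- limit s → t₀⁺
  have hlim : Tendsto (fun s => S s - I s) (𝓝[Ioc t₀ ts] t₀) (𝓝 (S t₀ - I t₀)) := by
    have h1 : ContinuousWithinAt (fun s => S s - I s) (Icc 0 T) t₀ :=
      (hScont.sub hIcont) t₀ ht₀mem
    exact h1.mono (fun x hx => hmemIcc x ⟨hx.1, le_trans hx.2 hts.2⟩)
  have hne : (𝓝[Ioc t₀ ts] t₀).NeBot := by
    rw [← mem_closure_iff_nhdsWithin_neBot, closure_Ioc (ne_of_lt hts.1)]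
    exact ⟨le_rfl, hts.1.le⟩
  have hfin : S ts - I ts ≤ S t₀ - I t₀ :=
    ge_of_tendsto hlim (eventually_mem_nhdsWithin.mono (fun s hs => key s hs))
  have := hafter ts hts
  linarith

/-- Theorem 1 (inexact quantum speed limit in Liouville space): for a normalized curve `v`
obeying the normalized master equation `v' = L v − Re⟨v, L v⟩ v`, the Liouville-space angle
between `v 0` and `v T` is bounded by the time integral of the variance of the Liouvillian. -/
theorem quantum_speed_limit_MT
    {E : Type*} [NormedAddCommGroup E] [InnerProductSpace ℂ E] [FiniteDimensional ℂ E]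
    (T : ℝ) (hT : 0 < T) (L : ℝ → (E →ₗ[ℂ] E)) (v : ℝ → E)
    (hnorm : ∀ t ∈ Set.Icc (0 : ℝ) T, ‖v t‖ = 1)
    (hode : ∀ t ∈ Set.Icc (0 : ℝ) T,
      HasDerivAt v (L t (v t) - (inner ℂ (v t) (L t (v t)) : ℂ).re • v t) t)
    (hint : IntervalIntegrable
      (fun t => Real.sqrt (‖L t (v t)‖ ^ 2 - ‖(inner ℂ (v t) (L t (v t)) : ℂ)‖ ^ 2))
      MeasureTheory.volume 0 T) :
    Real.arccos ‖(inner ℂ (v 0) (v T) : ℂ)‖ ≤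
      ∫ t in (0 : ℝ)..T,
        Real.sqrt (‖L t (v t)‖ ^ 2 - ‖(inner ℂ (v t) (L t (v t)) : ℂ)‖ ^ 2) := by
  set z : ℝ → ℂ := fun t => (inner ℂ (v t) (L t (v t)) : ℂ) with hzdef
  set w : ℝ → E := fun t => L t (v t) - z t • v t with hwdef
  set a : ℝ → ℂ := fun t => (inner ℂ (v 0) (v t) : ℂ) with hadef
  set p : ℝ → ℝ := fun t => ‖a t‖ ^ 2 with hpdef
  set a' : ℝ → ℂ := fun t => (inner ℂ (v 0) (L t (v t) - (z t).re • v t) : ℂ) with ha'def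
  set p' : ℝ → ℝ := fun t => 2 * ((starRingEnd ℂ) (a t) * a' t).re with hp'def
  have h0mem : (0:ℝ) ∈ Set.Icc (0:ℝ) T := ⟨le_rfl, hT.le⟩
  have hTmem : T ∈ Set.Icc (0:ℝ) T := ⟨hT.le, le_rfl⟩
  have hvv : ∀ t ∈ Set.Icc (0:ℝ) T, (inner ℂ (v t) (v t) : ℂ) = 1 := by
    intro t ht
    rw [inner_self_eq_norm_sq_to_K, hnorm t ht]
    norm_num
  have hvw : ∀ t ∈ Set.Icc (0:ℝ) T, (inner ℂ (v t) (w t) : ℂ) = 0 := by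
    intro t ht
    rw [hwdef]
    simp only
    rw [inner_sub_right, inner_smul_right, hvv t ht, mul_one, hzdef, sub_self]
  have hLv : ∀ t, L t (v t) = z t • v t + w t := by
    intro t; rw [hwdef]; simp
  have hΔw : ∀ t ∈ Set.Icc (0:ℝ) T,
      Real.sqrt (‖L t (v t)‖ ^ 2 - ‖z t‖ ^ 2) = ‖w t‖ := by
    intro t ht
    have horth : (inner ℂ (z t • v t) (w t) : ℂ) = 0 := by
      rw [inner_smul_left, hvw t ht, mul_zero]
    have h1 : ‖L t (v t)‖ ^ 2 = ‖z t • v t‖ ^ 2 + ‖w t‖ ^ 2 := by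
      conv_lhs => rw [hLv t]
      rw [norm_add_sq (𝕜 := ℂ), horth]
      simp
    have h2 : ‖z t • v t‖ = ‖z t‖ := by rw [norm_smul, hnorm t ht, mul_one]
    rw [h1, h2]
    rw [show ‖z t‖ ^ 2 + ‖w t‖ ^ 2 - ‖z t‖ ^ 2 = ‖w t‖ ^ 2 by ring]
    exact Real.sqrt_sq (norm_nonneg _)
  have ha : ∀ t ∈ Set.Icc (0:ℝ) T, HasDerivAt a (a' t) t := by
    intro t ht
    have h := (hasDerivAt_const t (v 0)).inner ℂ (hode t ht)
    simpa using h
  have hpderiv : ∀ t ∈ Set.Icc (0:ℝ) T, HasDerivAt p (p' t) t := by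
    intro t ht
    have h := (ha t ht).inner ℂ (ha t ht)
    have h2 := Complex.reCLM.hasFDerivAt.comp_hasDerivAt t h
    rw [Function.comp_def] at h2
    have hfun : (fun s => Complex.reCLM ((inner ℂ (a s) (a s) : ℂ))) = p := by
      funext s
      simpa using inner_self_eq_norm_sq (𝕜 := ℂ) (a s)
    have hval : Complex.reCLM ((inner ℂ (a t) (a' t) : ℂ) + (inner ℂ (a' t) (a t) : ℂ)) = p' t := by
      simp only [RCLike.inner_apply, Complex.reCLM_apply, hp'def]
      simp [Complex.add_re, Complex.mul_re, Complex.conj_re, Complex.conj_im]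
      ring
    rw [hfun, hval] at h2
    exact h2
  have ha'eq : ∀ t ∈ Set.Icc (0:ℝ) T,
      a' t = (inner ℂ (v 0) (w t) : ℂ) + (z t - ((z t).re : ℂ)) * a t := by
    intro t ht
    rw [ha'def]
    simp only
    have h1 : L t (v t) - (z t).re • v t = w t + (z t - ((z t).re : ℂ)) • v t := by
      rw [hwdef]
      simp only
      rw [RCLike.real_smul_eq_coe_smul (K := ℂ), sub_smul]
      abel
    rw [h1, inner_add_right, inner_smul_right]
  have hple : ∀ t ∈ Set.Icc (0:ℝ) T, 0 ≤ p t ∧ p t ≤ 1 := by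
    intro t ht
    refine ⟨by positivity, ?_⟩
    have h := norm_inner_le_norm (𝕜 := ℂ) (v 0) (v t)
    rw [hnorm 0 h0mem, hnorm t ht, one_mul] at h
    have h2 : ‖a t‖ ≤ 1 := h
    rw [hpdef]
    simp only
    nlinarith [norm_nonneg (a t)]
  have hp0 : p 0 = 1 := by
    rw [hpdef]
    simp only [hadef]
    rw [hvv 0 h0mem]
    simp
  have hbd : ∀ t ∈ Set.Icc (0:ℝ) T,
      |p' t| ≤ 2 * Real.sqrt (‖L t (v t)‖ ^ 2 - ‖z t‖ ^ 2) * Real.sqrt (p t * (1 - p t)) := by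
    intro t ht
    rw [hΔw t ht]
    have hre : ((starRingEnd ℂ) (a t) * a' t).re
        = ((starRingEnd ℂ) (a t) * (inner ℂ (v 0) (w t) : ℂ)).re := by
      rw [ha'eq t ht, mul_add, Complex.add_re]
      have h0 : ((starRingEnd ℂ) (a t) * ((z t - ((z t).re : ℂ)) * a t)).re = 0 := by
        have hmul : (starRingEnd ℂ) (a t) * ((z t - ((z t).re : ℂ)) * a t)
            = (z t - ((z t).re : ℂ)) * ((starRingEnd ℂ) (a t) * a t) := by ring
        have hmc : (starRingEnd ℂ) (a t) * a t = ((Complex.normSq (a t)) : ℂ) := by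
          rw [mul_comm]; exact Complex.mul_conj (a t)
        rw [hmul, hmc]
        simp [Complex.mul_re]
      rw [h0, add_zero]
    have hvow : ‖(inner ℂ (v 0) (w t) : ℂ)‖ ≤ Real.sqrt (1 - p t) * ‖w t‖ := by
      set c : ℂ := (inner ℂ (v t) (v 0) : ℂ) with hcdef
      set u : E := v 0 - c • v t with hudef
      have hca : c = (starRingEnd ℂ) (a t) := by
        rw [hcdef, hadef]
        exact (inner_conj_symm _ _).symm
      have hcu : (inner ℂ u (w t) : ℂ) = (inner ℂ (v 0) (w t) : ℂ) := by
        rw [hudef, inner_sub_left, inner_smul_left, hvw t ht, mul_zero, sub_zero]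
      have huu : (inner ℂ u u : ℂ) = 1 - (starRingEnd ℂ) (a t) * a t := by
        have e1 : (inner ℂ (v 0) (v t) : ℂ) = a t := rfl
        have e2 : (inner ℂ (v t) (v 0) : ℂ) = (starRingEnd ℂ) (a t) :=
          (inner_conj_symm (v t) (v 0)).symm
        rw [hudef, inner_sub_sub_self]
        simp only [inner_smul_left, inner_smul_right, hvv t ht, hvv 0 h0mem, e1, e2, hca,
          mul_one, Complex.conj_conj]
        ring
      have hnu : ‖u‖ ^ 2 = 1 - p t := by
        have h2 := inner_self_eq_norm_sq (𝕜 := ℂ) u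
        have hmc : (starRingEnd ℂ) (a t) * a t = ((Complex.normSq (a t)) : ℂ) := by
          rw [mul_comm]; exact Complex.mul_conj (a t)
        rw [huu, hmc] at h2
        have h3 : RCLike.re ((1:ℂ) - ((Complex.normSq (a t)) : ℂ))
            = 1 - Complex.normSq (a t) := by simp
        rw [h3] at h2
        rw [← h2, hpdef]
        simp only
        rw [Complex.normSq_eq_norm_sq]
      have hnu' : ‖u‖ = Real.sqrt (1 - p t) := by
        rw [← hnu, Real.sqrt_sq (norm_nonneg _)]
      calc ‖(inner ℂ (v 0) (w t) : ℂ)‖ = ‖(inner ℂ u (w t) : ℂ)‖ := by rw [hcu]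
        _ ≤ ‖u‖ * ‖w t‖ := norm_inner_le_norm _ _
        _ = Real.sqrt (1 - p t) * ‖w t‖ := by rw [hnu']
    have hnorma : ‖a t‖ = Real.sqrt (p t) := by
      rw [hpdef]; simp only; rw [Real.sqrt_sq (norm_nonneg _)]
    have h4 : |((starRingEnd ℂ) (a t) * (inner ℂ (v 0) (w t) : ℂ)).re|
        ≤ Real.sqrt (p t) * (Real.sqrt (1 - p t) * ‖w t‖) := by
      refine le_trans (Complex.abs_re_le_norm _) ?_
      rw [norm_mul, Complex.norm_conj]
      rw [hnorma]
      refine mul_le_mul_of_nonneg_left ?_ (Real.sqrt_nonneg _)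
      exact hvow
    have h5 : |p' t| = 2 * |((starRingEnd ℂ) (a t) * a' t).re| := by
      rw [hp'def]; simp only [abs_mul]; norm_num
    rw [h5, hre]
    rw [Real.sqrt_mul (hple t ht).1]
    nlinarith [h4]
  have hmain := qsl_comparison T hT p (fun t => Real.sqrt (‖L t (v t)‖ ^ 2 - ‖z t‖ ^ 2)) p'
    hpderiv hp0 hple (fun t => Real.sqrt_nonneg _) hbd hint
  have hfin : Real.sqrt (p T) = ‖a T‖ := by
    rw [hpdef]; simp only; exact Real.sqrt_sq (norm_nonneg _)
  rw [hfin] at hmain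
  exact hmain
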